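/- Let N ≥ 2 be an integer that is not prime, and let p be a prime number dividing N. If p = 5 or p ≡ ±1 (mod 5), then N is monomially reducible. -/

import Mathlib

namespace Monomial

/-- The elementary matrix `[[a, -1], [1, 0]]` over `ZMod N`. -/
def mat {N : ℕ} (a : ZMod N) : Matrix (Fin 2) (Fin 2) (ZMod N) := !![a, -1; 1, 0]

/-- `M [a₁, …, aₙ] = mat aₙ * ⋯ * mat a₁`. -/
def M {N : ℕ} (l : List (ZMod N)) : Matrix (Fin 2) (Fin 2) (ZMod N) :=
  (l.reverse.map mat).prod

/-- A tuple is a solution of (E_N) if the associated matrix is `±Id`. -/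
def IsSolution {N : ℕ} (l : List (ZMod N)) : Prop := M l = 1 ∨ M l = -1

/-- The sum `(a₁,…,aₙ) ⊕ (b₁,…,bₘ) = (a₁+bₘ, a₂,…,aₙ₋₁, aₙ+b₁, b₂,…,bₘ₋₁)`. -/
def osum {N : ℕ} (u v : List (ZMod N)) : List (ZMod N) :=
  (u.headI + v.getLastD 0) ::
    ((u.drop 1).dropLast ++ (u.getLastD 0 + v.headI) :: (v.drop 1).dropLast)

/-- Equivalence: `v` is a cyclic permutation of `u` or of the reversal of `u`. -/
def CyclicEquiv {N : ℕ} (u v : List (ZMod N)) : Prop :=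
  (∃ i, v = u.rotate i) ∨ (∃ i, v = u.reverse.rotate i)

/-- A tuple is reducible if, up to equivalence, it is a sum of an `m`-tuple (`m ≥ 3`)
with a solution of size `l ≥ 3`. -/
def Reducible {N : ℕ} (c : List (ZMod N)) : Prop :=
  ∃ a b : List (ZMod N), 3 ≤ a.length ∧ 3 ≤ b.length ∧ IsSolution b ∧
    CyclicEquiv c (osum a b)

/-- An irreducible solution: a solution which is not reducible (and `(0,0)` is
not considered irreducible). -/
def IrreducibleSol {N : ℕ} (c : List (ZMod N)) : Prop :=
  IsSolution c ∧ ¬ Reducible c ∧ c ≠ [0, 0]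

/-- The size of the `k`-monomial minimal solution of (E_N): the least `n > 0` such
that the constant `n`-tuple `(k, …, k)` is a solution. -/
noncomputable def monomialMinimalSize (N : ℕ) (k : ZMod N) : ℕ :=
  sInf {n | 0 < n ∧ IsSolution (List.replicate n k)}

/-- `N` is monomially irreducible if, for every `k ≠ 0`, the `k`-monomial minimal
solution of (E_N) is irreducible. -/
def MonomiallyIrreducible (N : ℕ) : Prop :=
  ∀ k : ZMod N, k ≠ 0 → IrreducibleSol (List.replicate (monomialMinimalSize N k) k)

/-- The continuant `Kₙ(x, …, x)` at a constant tuple: `K₀ = 1`, `K₁ = x`,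
`Kₙ₊₂ = x * Kₙ₊₁ - Kₙ`. -/
def K {N : ℕ} (x : ZMod N) : ℕ → ZMod N
  | 0 => 1
  | 1 => x
  | n + 2 => x * K x (n + 1) - K x n

/-! ### auxiliary -/

def KK {R : Type*} [CommRing R] (x : R) : ℕ → R
  | 0 => 1
  | 1 => x
  | n + 2 => x * KK x (n + 1) - KK x n

def KKm {R : Type*} [CommRing R] (x : R) : ℕ → R
  | 0 => 0
  | n + 1 => KK x n

@[simp] lemma KK_zero {R : Type*} [CommRing R] (x : R) : KK x 0 = 1 := rfl
@[simp] lemma KK_one {R : Type*} [CommRing R] (x : R) : KK x 1 = x := rfl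
lemma KK_add_two {R : Type*} [CommRing R] (x : R) (n : ℕ) :
    KK x (n + 2) = x * KK x (n + 1) - KK x n := rfl
@[simp] lemma KKm_zero {R : Type*} [CommRing R] (x : R) : KKm x 0 = 0 := rfl
@[simp] lemma KKm_succ {R : Type*} [CommRing R] (x : R) (n : ℕ) : KKm x (n + 1) = KK x n := rfl

lemma KK_succ {R : Type*} [CommRing R] (x : R) (n : ℕ) :
    KK x (n + 1) = x * KK x n - KKm x n := by
  cases n with
  | zero => simp
  | succ n => rw [KK_add_two, KKm_succ]

lemma KK_det {R : Type*} [CommRing R] (x : R) (n : ℕ) :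
    KK x (n + 1) * KKm x n = (KK x n) ^ 2 - 1 := by
  induction n with
  | zero => simp
  | succ n ih =>
    rw [KK_add_two, KKm_succ]
    linear_combination ih - KK x (n + 1) * KK_succ x n

lemma map_KK {R S : Type*} [CommRing R] [CommRing S] (f : R →+* S) (x : R) (n : ℕ) :
    f (KK x n) = KK (f x) n := by
  induction n using Nat.twoStepInduction with
  | zero => simp
  | one => simp
  | more n ih1 ih2 => rw [KK_add_two, KK_add_two, map_sub, map_mul, ih1, ih2]

lemma KK_prod {R S : Type*} [CommRing R] [CommRing S] (x : R) (y : S) (n : ℕ) :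
    KK ((x, y) : R × S) n = (KK x n, KK y n) := by
  induction n using Nat.twoStepInduction with
  | zero => rfl
  | one => rfl
  | more n ih1 ih2 =>
    rw [KK_add_two, KK_add_two, KK_add_two, ih1, ih2, Prod.mk_mul_mk, Prod.mk_sub_mk]

/-! ### M lemmas -/

lemma M_nil {N : ℕ} : M ([] : List (ZMod N)) = 1 := rfl

lemma M_cons {N : ℕ} (x : ZMod N) (l : List (ZMod N)) : M (x :: l) = M l * mat x := by
  simp [M]

lemma M_concat {N : ℕ} (l : List (ZMod N)) (x : ZMod N) : M (l ++ [x]) = mat x * M l := by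
  simp [M]

lemma M_replicate_pow {N : ℕ} (k : ZMod N) (n : ℕ) :
    M (List.replicate n k) = (mat k) ^ n := by
  induction n with
  | zero => simp [M_nil]
  | succ n ih => rw [List.replicate_succ, M_cons, ih, pow_succ]

lemma M_replicate_KK {N : ℕ} (k : ZMod N) (j : ℕ) :
    M (List.replicate (j + 1) k) =
      !![KK k (j + 1), -(KK k j); KK k j, -(KKm k j)] := by
  induction j with
  | zero =>
    rw [List.replicate_one, show ([k] : List (ZMod N)) = [] ++ [k] by simp, M_concat, M_nil,
      mul_one, mat]
    norm_num
  | succ j ih =>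
    have h1 : KK k (j + 1 + 1) = k * KK k (j + 1) - KK k j := KK_add_two k j
    have h2 : KK k (j + 1) = k * KK k j - KKm k j := KK_succ k j
    rw [List.replicate_succ, M_cons, ih, mat, Matrix.mul_fin_two, ← Matrix.ext_iff]
    simp [Fin.forall_fin_two]
    exact ⟨by linear_combination -h1, by linear_combination -h2⟩

end Monomial

namespace Monomial

lemma sol_KK_eq_zero {N : ℕ} {k : ZMod N} {j : ℕ}
    (h : IsSolution (List.replicate (j + 1) k)) : KK k j = 0 := by
  rw [IsSolution, M_replicate_KK] at h
  rcases h with h | h <;>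
  · have := congrFun (congrFun h 1) 0
    simpa [Matrix.one_apply] using this

lemma reducible_replicate {N : ℕ} (k : ZMod N) (j s : ℕ) (ε : ZMod N)
    (hε : ε = 1 ∨ ε = -1) (hK : KK k (j + 1) = ε) :
    Reducible (List.replicate (j + 4 + s) k) := by
  set β : ZMod N := ε * KK k j with hβ
  refine ⟨(k - β) :: (List.replicate (s + 1) k ++ [k - β]),
          β :: (List.replicate (j + 1) k ++ [β]), ?_, ?_, ?_, Or.inl ⟨0, ?_⟩⟩
  · simp
  · simp
  · have hε2 : ε * ε = 1 := by rcases hε with h | h <;> rw [h] <;> ring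
    have hdet : ε * KKm k j = KK k j ^ 2 - 1 := by rw [← hK]; exact KK_det k j
    have hMb : M (β :: (List.replicate (j + 1) k ++ [β])) = !![-ε, 0; 0, -ε] := by
      rw [M_cons, M_concat, M_replicate_KK, mat, Matrix.mul_fin_two, Matrix.mul_fin_two,
        ← Matrix.ext_iff]
      simp [Fin.forall_fin_two, hK, hβ]
      refine ⟨⟨by linear_combination (ε * KK k j ^ 2 - KKm k j) * hε2 + ε * hdet,
        by linear_combination -(KK k j) * hε2⟩, by linear_combination KK k j * hε2⟩
    rcases hε with h | h
    · right
      rw [hMb, h]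
      rw [show (-1 : Matrix (Fin 2) (Fin 2) (ZMod N)) = -(1 : Matrix (Fin 2) (Fin 2) (ZMod N)) from rfl,
        Matrix.one_fin_two]
      norm_num
    · left
      rw [hMb, h, Matrix.one_fin_two]
      norm_num
  · rw [List.rotate_zero, osum]
    simp only [List.headI_cons, List.getLastD_cons, List.getLastD_concat, List.drop_succ_cons,
      List.drop_zero, List.dropLast_concat, sub_add_cancel]
    refine List.eq_replicate_iff.mpr ⟨by simp; omega, ?_⟩
    intro b hb
    simp [List.mem_replicate] at hb
    exact hb

lemma not_monomiallyIrreducible_of {N : ℕ} (hN : 2 ≤ N) (k : ZMod N) (hk : k ≠ 0)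
    (j : ℕ) (ε : ZMod N) (hε : ε = 1 ∨ ε = -1) (hK : KK k (j + 1) = ε)
    (hnz : ∀ i, i ≤ j + 2 → KK k i ≠ 0) :
    ¬ MonomiallyIrreducible N := by
  intro hMI
  haveI : NeZero N := ⟨by omega⟩
  obtain ⟨-, hnred, -⟩ := hMI k hk
  apply hnred
  have hne : {n | 0 < n ∧ IsSolution (List.replicate n k)}.Nonempty := by
    have h1 : mat k * !![0, 1; -1, k] = 1 := by
      rw [mat, Matrix.mul_fin_two, Matrix.one_fin_two]; norm_num
    have h2 : !![0, 1; -1, k] * mat k = 1 := by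
      rw [mat, Matrix.mul_fin_two, Matrix.one_fin_two]; norm_num
    let u : (Matrix (Fin 2) (Fin 2) (ZMod N))ˣ := ⟨mat k, !![0, 1; -1, k], h1, h2⟩
    refine ⟨orderOf u, orderOf_pos u, Or.inl ?_⟩
    rw [M_replicate_pow, show mat k = u.val from rfl, ← Units.val_pow_eq_pow_val,
      pow_orderOf_eq_one, Units.val_one]
  have hmem : 0 < monomialMinimalSize N k ∧
      IsSolution (List.replicate (monomialMinimalSize N k) k) := Nat.sInf_mem hne
  obtain ⟨hpos, hsol⟩ := hmem
  have hge : j + 4 ≤ monomialMinimalSize N k := by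
    by_contra hlt
    push_neg at hlt
    obtain ⟨i, hi⟩ : ∃ i, monomialMinimalSize N k = i + 1 := ⟨monomialMinimalSize N k - 1, by omega⟩
    rw [hi] at hsol
    exact hnz i (by omega) (sol_KK_eq_zero hsol)
  obtain ⟨s, hs⟩ : ∃ s, monomialMinimalSize N k = j + 4 + s := ⟨monomialMinimalSize N k - (j + 4), by omega⟩
  rw [hs]
  exact reducible_replicate k j s ε hε hK

end Monomial

namespace Monomial

lemma omega_five : ∃ ω : ZMod 5, ω * ω = ω + 1 := ⟨3, by decide⟩

lemma two_zmod_five_ne : ((2 : ℤ) : ZMod 5) ≠ 0 := by decide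

lemma exists_omega (p : ℕ) [hp : Fact p.Prime] (h : p = 5 ∨ p % 5 = 1 ∨ p % 5 = 4) :
    ∃ ω : ZMod p, ω * ω = ω + 1 := by
  rcases eq_or_ne p 5 with hp5 | hp5
  · subst hp5
    exact omega_five
  · have h5 : p % 5 = 1 ∨ p % 5 = 4 := by
      rcases h with h | h | h
      · exact absurd h hp5
      · exact Or.inl h
      · exact Or.inr h
    have hp2 : p ≠ 2 := by rintro rfl; revert h5; decide
    haveI : Fact (Nat.Prime 5) := ⟨by norm_num⟩
    have hq : legendreSym p 5 = 1 := by
      rw [show (5 : ℤ) = ((5 : ℕ) : ℤ) by norm_num,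
        legendreSym.quadratic_reciprocity_one_mod_four (p := 5) (q := p) (by norm_num) hp2]
      have hmod : legendreSym 5 (p : ℤ) = legendreSym 5 ((p % 5 : ℕ) : ℤ) := by
        rw [legendreSym.mod 5]
        norm_cast
      rw [hmod]
      rcases h5 with h5 | h5 <;> rw [h5]
      · rw [show ((1 : ℕ) : ℤ) = 1 by norm_num]
        exact legendreSym.at_one 5
      · rw [show ((4 : ℕ) : ℤ) = 2 ^ 2 by norm_num]
        exact legendreSym.sq_one' 5 (a := 2) two_zmod_five_ne
    have h50 : ((5 : ℤ) : ZMod p) ≠ 0 := by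
      rw [show ((5 : ℤ) : ZMod p) = ((5 : ℕ) : ZMod p) by push_cast; ring, Ne,
        ZMod.natCast_eq_zero_iff]
      intro hdvd
      exact hp5 ((Nat.prime_dvd_prime_iff_eq hp.out (by norm_num)).mp hdvd)
    have hsq : IsSquare ((5 : ℤ) : ZMod p) := (legendreSym.eq_one_iff p h50).mp hq
    obtain ⟨r, hr⟩ := hsq
    have h2 : (2 : ZMod p) ≠ 0 := by
      rw [show (2 : ZMod p) = ((2 : ℕ) : ZMod p) by push_cast; ring, Ne,
        ZMod.natCast_eq_zero_iff]
      intro hdvd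
      exact hp2 ((Nat.prime_dvd_prime_iff_eq hp.out (by norm_num)).mp hdvd)
    refine ⟨(1 + r) * (2 : ZMod p)⁻¹, ?_⟩
    have h2' : (2 : ZMod p) * (2 : ZMod p)⁻¹ = 1 := by
      field_simp
    have hr' : r * r = 5 := by
      have h5' : ((5 : ℤ) : ZMod p) = (5 : ZMod p) := by push_cast; ring
      rw [h5'] at hr
      exact hr.symm
    haveI : Fact (1 < p) := ⟨hp.out.one_lt⟩
    field_simp
    push_cast
    linear_combination hr'

end Monomial

namespace Monomial

theorem stmt7 (N p : ℕ) (hN : 2 ≤ N) (hnp : ¬ N.Prime) (hp : p.Prime)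
    (hdvd : p ∣ N) (h : p = 5 ∨ p % 5 = 1 ∨ p % 5 = 4) :
    ¬ MonomiallyIrreducible N := by
  haveI : Fact p.Prime := ⟨hp⟩
  have hp2 : p ≠ 2 := by
    rintro rfl
    rcases h with h | h | h <;> omega
  obtain ⟨a, m, hpm, hN'⟩ := Nat.exists_eq_pow_mul_and_not_dvd (show N ≠ 0 by omega) p hp.ne_one
  have hm0 : m ≠ 0 := by rintro rfl; rw [mul_zero] at hN'; omega
  have ha1 : 1 ≤ a := by
    by_contra ha
    push_neg at ha
    interval_cases a
    rw [pow_zero, one_mul] at hN'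
    exact hpm (hN' ▸ hdvd)
  have hco : Nat.Coprime (p ^ a) m :=
    Nat.Coprime.pow_left _ ((Nat.Prime.coprime_iff_not_dvd hp).mpr hpm)
  rcases lt_or_ge a 2 with ha2 | ha2
  · -- a = 1 : use k ≡ ω mod p, k ≡ -1 mod m
    have ha : a = 1 := by omega
    subst ha
    rw [pow_one] at hN' hco
    subst hN'
    have hm2 : 2 ≤ m := by
      rcases Nat.lt_or_ge m 2 with hm | hm
      · interval_cases m
        · omega
        · rw [mul_one] at hnp; exact absurd hp hnp
      · exact hm
    haveI : Fact (1 < p * m) := ⟨by omega⟩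
    haveI : Fact (1 < m) := ⟨hm2⟩
    obtain ⟨ω, hω⟩ := exists_omega p h
    set φ := ZMod.chineseRemainder hco with hφ
    set k : ZMod (p * m) := φ.symm (ω, (-1 : ZMod m)) with hk
    have hφk : φ k = (ω, (-1 : ZMod m)) := φ.apply_symm_apply _
    have hcomp : ∀ i, φ (KK k i) = (KK ω i, KK (-1 : ZMod m) i) := by
      intro i
      rw [show φ (KK k i) = φ.toRingHom (KK k i) from rfl, map_KK, RingEquiv.toRingHom_eq_coe,
        RingEquiv.coe_toRingHom, hφk, KK_prod]
    have hω0 : ω ≠ 0 := by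
      intro h0
      rw [h0] at hω
      simp only [mul_zero, zero_add] at hω
      exact zero_ne_one hω
    -- component values
    have hω2 : KK ω 2 = ω := by
      rw [show (2 : ℕ) = 0 + 2 from rfl, KK_add_two, KK_one, KK_zero]
      linear_combination hω
    have hω3 : KK ω 3 = 1 := by
      rw [show (3 : ℕ) = 1 + 2 from rfl, KK_add_two, hω2, KK_one]
      linear_combination hω
    have hm1 : KK (-1 : ZMod m) 1 = -1 := by simp
    have hm2' : KK (-1 : ZMod m) 2 = 0 := by
      rw [show (2 : ℕ) = 0 + 2 from rfl, KK_add_two]; ring_nf; simp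
    have hm3 : KK (-1 : ZMod m) 3 = 1 := by
      rw [show (3 : ℕ) = 1 + 2 from rfl, KK_add_two, hm2']; simp
    have hm4 : KK (-1 : ZMod m) 4 = -1 := by
      rw [show (4 : ℕ) = 2 + 2 from rfl, KK_add_two, hm3, hm2']; ring
    -- combined facts
    have hKk3 : KK k 3 = 1 := by
      apply φ.injective
      rw [hcomp 3, map_one, hω3, hm3]
      rfl
    have hkne : k ≠ 0 := by
      intro h0
      have := hφk
      rw [h0, map_zero] at this
      have h2 : ((0 : ZMod p × ZMod m)).2 = ((ω, (-1 : ZMod m))).2 := by rw [this]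
      simp at h2
    refine not_monomiallyIrreducible_of hN k hkne 2 1 (Or.inl rfl) hKk3 ?_
    intro i hi h0
    have hc := hcomp i
    rw [h0, map_zero] at hc
    have hfst : (0 : ZMod p) = KK ω i := congrArg Prod.fst hc
    have hsnd : (0 : ZMod m) = KK (-1 : ZMod m) i := congrArg Prod.snd hc
    interval_cases i
    · simp at hsnd
    · simp at hsnd
    · rw [hω2] at hfst; exact hω0 hfst.symm
    · rw [hm3] at hsnd; simp at hsnd
    · rw [hm4] at hsnd
      exact (neg_ne_zero.mpr one_ne_zero) hsnd.symm
  · -- a ≥ 2 : use k ≡ p^(a-1) mod p^a, k ≡ 0 mod m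
    subst hN'
    haveI : Fact (1 < p ^ a * m) := ⟨by omega⟩
    have hpa2 : 2 ≤ p ^ a := by
      have := hp.two_le
      calc 2 ≤ p := this
      _ ≤ p ^ a := Nat.le_self_pow (by omega) p
    haveI : Fact (1 < p ^ a) := ⟨by omega⟩
    set t : ZMod (p ^ a) := ((p ^ (a - 1) : ℕ) : ZMod (p ^ a)) with ht
    have ht0 : t ≠ 0 := by
      rw [ht, Ne, ZMod.natCast_eq_zero_iff]
      rw [Nat.pow_dvd_pow_iff_le_right hp.one_lt]
      omega
    have ht2 : t * t = 0 := by
      rw [ht, ← Nat.cast_mul, ZMod.natCast_eq_zero_iff, ← pow_add]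
      exact pow_dvd_pow p (by omega)
    have h2t : t + t ≠ 0 := by
      rw [ht, ← Nat.cast_add, Ne, ZMod.natCast_eq_zero_iff, ← two_mul,
        show p ^ a = p ^ (a - 1) * p by rw [← pow_succ]; congr 1; omega,
        show 2 * p ^ (a - 1) = p ^ (a - 1) * 2 by ring,
        Nat.mul_dvd_mul_iff_left (Nat.pow_pos (n := a - 1) hp.pos)]
      intro hd
      exact hp2 ((Nat.prime_dvd_prime_iff_eq hp (by norm_num)).mp hd)
    have hKt2 : KK t 2 = -1 := by
      rw [show (2 : ℕ) = 0 + 2 from rfl, KK_add_two]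
      simp [ht2]
    have hKt3 : KK t 3 = -(t + t) := by
      rw [show (3 : ℕ) = 1 + 2 from rfl, KK_add_two, hKt2]
      simp
      ring
    have hKm2 : KK (0 : ZMod m) 2 = -1 := by
      rw [show (2 : ℕ) = 0 + 2 from rfl, KK_add_two]; simp
    set φ := ZMod.chineseRemainder hco with hφ
    set k : ZMod (p ^ a * m) := φ.symm (t, (0 : ZMod m)) with hk
    have hφk : φ k = (t, (0 : ZMod m)) := φ.apply_symm_apply _
    have hcomp : ∀ i, φ (KK k i) = (KK t i, KK (0 : ZMod m) i) := by
      intro i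
      rw [show φ (KK k i) = φ.toRingHom (KK k i) from rfl, map_KK, RingEquiv.toRingHom_eq_coe,
        RingEquiv.coe_toRingHom, hφk, KK_prod]
    have hKk2 : KK k 2 = -1 := by
      apply φ.injective
      rw [hcomp 2, map_neg, map_one, hKt2, hKm2]
      rfl
    have hkne : k ≠ 0 := by
      intro h0
      have := hφk
      rw [h0, map_zero] at this
      have h1 : ((0 : ZMod (p ^ a) × ZMod m)).1 = ((t, (0 : ZMod m))).1 := by rw [this]
      simp at h1
      exact ht0 h1.symm
    refine not_monomiallyIrreducible_of hN k hkne 1 (-1) (Or.inr rfl) hKk2 ?_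
    intro i hi h0
    have hc := hcomp i
    rw [h0, map_zero] at hc
    have hfst : (0 : ZMod (p ^ a)) = KK t i := congrArg Prod.fst hc
    interval_cases i
    · simp at hfst
    · rw [show KK t 1 = t from rfl] at hfst; exact ht0 hfst.symm
    · rw [hKt2] at hfst
      exact (neg_ne_zero.mpr one_ne_zero) hfst.symm
    · rw [hKt3] at hfst
      exact h2t (by linear_combination hfst)

end Monomial
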